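/- The closed unit disk in ℝ² cannot be partitioned into two disjoint congruent pieces; that is, there is no decomposition D = A ∪ B with A ∩ B = ∅ and an isometry φ of ℝ² with φ(A) = B. -/

import Mathlib

open Metric
open scoped RealInnerProductSpace

local notation "E" => EuclideanSpace ℝ (Fin 2)

lemma core (A B : Set (EuclideanSpace ℝ (Fin 2)))
    (φ : EuclideanSpace ℝ (Fin 2) ≃ᵢ EuclideanSpace ℝ (Fin 2))
    (hU : A ∪ B = Metric.closedBall (0 : EuclideanSpace ℝ (Fin 2)) 1)
    (hI : A ∩ B = ∅) (hφ : φ '' A = B) (h0 : (0 : E) ∈ A) : False := by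
  -- c = φ 0 ∈ B
  have hcB : φ 0 ∈ B := hφ ▸ Set.mem_image_of_mem φ h0
  set c : E := φ 0 with hc
  have hcne : c ≠ 0 := by
    intro h
    have : (0 : E) ∈ A ∩ B := ⟨h0, h ▸ hcB⟩
    simpa [hI] using this
  -- every point of B is within distance 1 of c and within distance 1 of 0
  have hBsub : B ⊆ Metric.closedBall (0 : E) 1 := hU ▸ Set.subset_union_right
  have hAsub : A ⊆ Metric.closedBall (0 : E) 1 := hU ▸ Set.subset_union_left
  have hBc : ∀ b ∈ B, dist b c ≤ 1 := by
    intro b hb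
    rw [← hφ] at hb
    obtain ⟨a, ha, rfl⟩ := hb
    rw [φ.dist_eq]
    simpa using hAsub ha
  -- construct unit vector x orthogonal to c
  set y : E := (WithLp.equiv 2 (Fin 2 → ℝ)).symm ![-(c 1), c 0] with hy
  have hy0 : y 0 = -(c 1) := rfl
  have hy1 : y 1 = c 0 := rfl
  have hyc : (inner ℝ y c : ℝ) = 0 := by
    rw [PiLp.inner_apply, Fin.sum_univ_two, hy0, hy1]
    simp [RCLike.inner_apply]
    ring
  have hyn : ‖y‖ = ‖c‖ := by
    rw [EuclideanSpace.norm_eq, EuclideanSpace.norm_eq, Fin.sum_univ_two, Fin.sum_univ_two,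
      hy0, hy1]
    rw [norm_neg, add_comm]
  have hyne : y ≠ 0 := by
    intro h
    apply hcne
    have : ‖c‖ = 0 := by rw [← hyn, h, norm_zero]
    exact norm_eq_zero.mp this
  set x : E := ‖y‖⁻¹ • y with hx
  have hxn : ‖x‖ = 1 := by
    rw [hx, norm_smul, norm_inv, norm_norm, inv_mul_cancel₀ (norm_ne_zero_iff.mpr hyne)]
  have hxc : (inner ℝ x c : ℝ) = 0 := by
    rw [hx, real_inner_smul_left, hyc, mul_zero]
  -- ±x ∈ A
  have key : ∀ z : E, ‖z‖ = 1 → (inner ℝ z c : ℝ) = 0 → z ∈ A := by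
    intro z hz hzc
    have hzD : z ∈ Metric.closedBall (0 : E) 1 := by
      simp [mem_closedBall, dist_eq_norm, hz]
    have hzAB : z ∈ A ∪ B := hU ▸ hzD
    rcases hzAB with h | h
    · exact h
    · exfalso
      have h1 : dist z c ≤ 1 := hBc z h
      have h2 : ‖z - c‖ ^ 2 = 1 + ‖c‖ ^ 2 := by
        rw [norm_sub_sq_real, hz, hzc]; ring
    -- but ‖z - c‖ ≤ 1 gives ‖z-c‖^2 ≤ 1, so ‖c‖ = 0
      have h3 : ‖z - c‖ ^ 2 ≤ 1 := by
        rw [dist_eq_norm] at h1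
        nlinarith [norm_nonneg (z - c)]
      have : ‖c‖ ^ 2 ≤ 0 := by linarith
      have : ‖c‖ = 0 := by nlinarith [norm_nonneg c]
      exact hcne (norm_eq_zero.mp this)
  have hxA : x ∈ A := key x hxn hxc
  have hnxA : (-x) ∈ A := by
    apply key
    · rw [norm_neg, hxn]
    · rw [inner_neg_left, hxc, neg_zero]
  -- images u, v
  set u : E := φ x with hu
  set v : E := φ (-x) with hv
  have huB : u ∈ B := hφ ▸ Set.mem_image_of_mem φ hxA
  have hvB : v ∈ B := hφ ▸ Set.mem_image_of_mem φ hnxA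
  have huv : ‖u - v‖ = 2 := by
    rw [← dist_eq_norm, hu, hv, φ.dist_eq, dist_eq_norm, sub_neg_eq_add]
    have : x + x = (2 : ℝ) • x := by module
    rw [this, norm_smul, hxn]
    simp
  have hun : ‖u‖ ≤ 1 := by simpa [mem_closedBall, dist_eq_norm] using hBsub huB
  have hvn : ‖v‖ ≤ 1 := by simpa [mem_closedBall, dist_eq_norm] using hBsub hvB
  -- parallelogram: v = -u and ‖u‖ = 1
  have hpar : ‖u + v‖ ^ 2 + ‖u - v‖ ^ 2 = 2 * ‖u‖ ^ 2 + 2 * ‖v‖ ^ 2 := by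
    rw [norm_add_sq_real, norm_sub_sq_real]; ring
  have hsq : ‖u + v‖ ^ 2 ≤ 0 := by nlinarith [norm_nonneg u, norm_nonneg v]
  have hsum0 : ‖u + v‖ = 0 := pow_eq_zero_iff two_ne_zero |>.mp (le_antisymm hsq (sq_nonneg _))
  have hveq : v = -u := by
    have := norm_eq_zero.mp hsum0
    linear_combination (norm := module) this
  have hu1 : ‖u‖ = 1 := by
    rw [hveq] at huv
    have : u - -u = (2:ℝ) • u := by module
    rw [this, norm_smul] at huv
    simp at huv
    linarith
  -- distances to c are both 1
  have huc : ‖u - c‖ = 1 := by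
    rw [← dist_eq_norm, hu, hc, φ.dist_eq, dist_eq_norm, sub_zero, hxn]
  have hvc : ‖v - c‖ = 1 := by
    rw [← dist_eq_norm, hv, hc, φ.dist_eq, dist_eq_norm, sub_zero, norm_neg, hxn]
  have hvc' : ‖u + c‖ = 1 := by
    rw [hveq] at hvc
    rw [← hvc, ← norm_neg (-u - c)]
    congr 1; module
  -- parallelogram again
  have hpar2 : ‖u + c‖ ^ 2 + ‖u - c‖ ^ 2 = 2 * ‖u‖ ^ 2 + 2 * ‖c‖ ^ 2 := by
    rw [norm_add_sq_real, norm_sub_sq_real]; ring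
  rw [hvc', huc, hu1] at hpar2
  norm_num at hpar2
  exact hcne hpar2

/-- The closed unit disk in ℝ² cannot be partitioned into two disjoint congruent pieces. -/
theorem stmt_0 :
    ¬ ∃ (A B : Set (EuclideanSpace ℝ (Fin 2)))
      (φ : EuclideanSpace ℝ (Fin 2) ≃ᵢ EuclideanSpace ℝ (Fin 2)),
      A ∪ B = Metric.closedBall (0 : EuclideanSpace ℝ (Fin 2)) 1 ∧
      A ∩ B = ∅ ∧ φ '' A = B := by
  rintro ⟨A, B, φ, hU, hI, hφ⟩
  have h0 : (0 : EuclideanSpace ℝ (Fin 2)) ∈ A ∪ B := by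
    rw [hU]; simp
  rcases h0 with h0 | h0
  · exact core A B φ hU hI hφ h0
  · refine core B A φ.symm ?_ ?_ ?_ h0
    · rw [Set.union_comm]; exact hU
    · rw [Set.inter_comm]; exact hI
    · rw [← hφ, Set.image_image]
      simp
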